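/- arXiv:1407.0062 — 2 statements merged into one kernel-verified Lean document; each statement's English description precedes it below -/
import Mathlib

section
/- The group Γ_k ⊆ U(p^k) (generated by the central S¹, the diagonal subgroup 𝒜_k, and the permutation subgroup ℬ_k) fits in a short exact sequence 1 → S¹ → Γ_k → (ℤ/p)^k × (ℤ/p)^k → 1, where S¹ is the center of U(p^k). -/
namespace GammaSES

variable {p k : ℕ} [NeZero p]

def zmodFin (p : ℕ) [NeZero p] : ZMod p ≃ Fin p :=
  ⟨fun a => ⟨a.val, ZMod.val_lt a⟩, fun i => ((i : ℕ) : ZMod p),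
   fun a => ZMod.natCast_rightInverse a,
   fun i => by ext; simp [ZMod.val_cast_of_lt i.isLt]⟩

def E (p k : ℕ) [NeZero p] : (Fin k → ZMod p) ≃ Fin (p ^ k) :=
  (Equiv.piCongrRight fun _ => zmodFin p).trans finFunctionFinEquiv

lemma E_apply (v : Fin k → ZMod p) :
    ((E p k v : Fin (p ^ k)) : ℕ) = ∑ r : Fin k, (v r).val * p ^ (r : ℕ) := rfl

lemma E_add_single (hp : 1 < p) (v : Fin k → ZMod p) (r : Fin k) :
    ((E p k (v + Pi.single r 1) : Fin (p ^ k)) : ℕ) =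
      if (v r).val < p - 1 then ((E p k v : Fin (p ^ k)) : ℕ) + p ^ (r : ℕ)
      else ((E p k v : Fin (p ^ k)) : ℕ) - (p - 1) * p ^ (r : ℕ) := by
  haveI : Fact (1 < p) := ⟨hp⟩
  have hS : ∀ w : Fin k → ZMod p, ((E p k w : Fin (p ^ k)) : ℕ)
      = (w r).val * p ^ (r : ℕ) + ∑ s ∈ Finset.univ.erase r, (w s).val * p ^ (s : ℕ) := by
    intro w
    rw [E_apply, ← Finset.add_sum_erase _ _ (Finset.mem_univ r)]
  have heq : ∑ s ∈ Finset.univ.erase r, ((v + (Pi.single r 1 : Fin k → ZMod p)) s).val * p ^ (s : ℕ)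
      = ∑ s ∈ Finset.univ.erase r, (v s).val * p ^ (s : ℕ) := by
    refine Finset.sum_congr rfl fun s hs => ?_
    have hsr : s ≠ r := Finset.ne_of_mem_erase hs
    rw [Pi.add_apply, Pi.single_eq_of_ne hsr, add_zero]
  rw [hS, hS, heq, Pi.add_apply, Pi.single_eq_same]
  have hvlt : (v r).val < p := ZMod.val_lt _
  by_cases h : (v r).val < p - 1
  · rw [if_pos h, ZMod.val_add_of_lt (by rw [ZMod.val_one]; omega), ZMod.val_one]
    ring_nf
  · rw [if_neg h]
    have hval : (v r).val = p - 1 := by omega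
    have : v r + 1 = 0 := by
      have h1 : v r = ((p - 1 : ℕ) : ZMod p) := by
        conv_lhs => rw [← ZMod.natCast_rightInverse (v r)]
        rw [hval]
      rw [h1]
      have h2 : ((p - 1 : ℕ) : ZMod p) + 1 = (((p - 1) + 1 : ℕ) : ZMod p) := by
        push_cast; ring
      rw [h2, Nat.sub_add_cancel (Nat.one_le_of_lt hp), ZMod.natCast_self]
    rw [this, ZMod.val_zero, zero_mul]
    have heq2 : (v r).val * p ^ (r : ℕ) = (p - 1) * p ^ (r : ℕ) := by rw [hval]
    omega

lemma E_symm_val (i : Fin (p ^ k)) (r : Fin k) :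
    (((E p k).symm i) r).val = (i : ℕ) / p ^ (r : ℕ) % p := by
  show (((zmodFin p).symm _ : ZMod p)).val = _
  simp only [zmodFin, Equiv.coe_fn_symm_mk]
  have : ((finFunctionFinEquiv.symm i : Fin k → Fin p) r : ℕ)
      = (i : ℕ) / p ^ (r : ℕ) % p := rfl
  rw [← this, ZMod.val_cast_of_lt (Fin.isLt _)]

/-- The translation permutation on indices. -/
def tau (p k : ℕ) [NeZero p] (r : Fin k) : Fin (p ^ k) → Fin (p ^ k) :=
  fun i => E p k ((E p k).symm i + Pi.single r 1)

lemma tau_coe (hp : 1 < p) (r : Fin k) (i : Fin (p ^ k)) :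
    ((tau p k r i : Fin (p ^ k)) : ℕ) =
      if (i : ℕ) / p ^ (r : ℕ) % p < p - 1 then (i : ℕ) + p ^ (r : ℕ)
      else (i : ℕ) - (p - 1) * p ^ (r : ℕ) := by
  unfold tau
  rw [E_add_single hp, E_symm_val, Equiv.apply_symm_apply]

lemma tau_injective (r : Fin k) : Function.Injective (tau p k r) := by
  intro i j h
  unfold tau at h
  have := (E p k).injective h
  have h2 := add_right_cancel this
  exact (E p k).symm.injective h2

lemma tau_comm (r s : Fin k) (i : Fin (p ^ k)) :
    tau p k r (tau p k s i) = tau p k s (tau p k r i) := by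
  unfold tau
  rw [Equiv.symm_apply_apply, Equiv.symm_apply_apply, add_right_comm]

lemma E_symm_tau (r : Fin k) (i : Fin (p ^ k)) :
    (E p k).symm (tau p k r i) = (E p k).symm i + Pi.single r 1 := by
  unfold tau; rw [Equiv.symm_apply_apply]

/-- Permutation-type matrix of a function. -/
def Pm (f : Fin (p ^ k) → Fin (p ^ k)) : Matrix (Fin (p ^ k)) (Fin (p ^ k)) ℂ :=
  Matrix.of fun i j => if j = f i then (1 : ℂ) else 0

lemma Pm_mul_Pm (f g : Fin (p ^ k) → Fin (p ^ k)) :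
    Pm (p := p) (k := k) f * Pm g = Pm (g ∘ f) := by
  ext i j
  simp only [Pm, Matrix.mul_apply, Matrix.of_apply, ite_mul, one_mul, zero_mul,
    Function.comp_apply]
  rw [Finset.sum_ite_eq' Finset.univ (f i) (fun l => if j = g l then (1:ℂ) else 0)]
  simp

lemma diagonal_mul_Pm (d : Fin (p ^ k) → ℂ) (f : Fin (p ^ k) → Fin (p ^ k)) :
    Matrix.diagonal d * Pm (p := p) (k := k) f
      = Matrix.of fun i j => if j = f i then d i else 0 := by
  ext i j
  rw [Matrix.diagonal_mul]
  simp only [Pm, Matrix.of_apply, mul_ite, mul_one, mul_zero]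

lemma Pm_mul_diagonal (d : Fin (p ^ k) → ℂ) (f : Fin (p ^ k) → Fin (p ^ k)) :
    Pm (p := p) (k := k) f * Matrix.diagonal d
      = Matrix.of fun i j => if j = f i then d (f i) else 0 := by
  ext i j
  rw [Matrix.mul_diagonal]
  simp only [Pm, Matrix.of_apply, ite_mul, one_mul, zero_mul]
  split_ifs with h
  · rw [h]
  · rfl

lemma mul_Pm_apply (M : Matrix (Fin (p ^ k)) (Fin (p ^ k)) ℂ)
    (f : Fin (p ^ k) → Fin (p ^ k)) (hf : Function.Injective f) (i : Fin (p ^ k)) :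
    (M * Pm (p := p) (k := k) f) i (f i) = M i i := by
  simp only [Pm, Matrix.mul_apply, Matrix.of_apply, mul_ite, mul_one, mul_zero]
  rw [Finset.sum_eq_single i]
  · simp
  · intro l _ hl
    rw [if_neg (fun h => hl (hf h.symm))]
  · intro h; exact absurd (Finset.mem_univ i) h

lemma Pm_mul_apply (M : Matrix (Fin (p ^ k)) (Fin (p ^ k)) ℂ)
    (f : Fin (p ^ k) → Fin (p ^ k)) (i j : Fin (p ^ k)) :
    (Pm (p := p) (k := k) f * M) i j = M (f i) j := by
  simp only [Pm, Matrix.mul_apply, Matrix.of_apply, ite_mul, one_mul, zero_mul]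
  rw [Finset.sum_ite_eq' Finset.univ (f i) (fun l => M l j)]
  simp

section Zeta

variable {ζ : ℂ}

lemma zpow_mod (hζp : ζ ^ p = 1) {m n : ℕ} (h : m % p = n % p) : ζ ^ m = ζ ^ n := by
  have key : ∀ m : ℕ, ζ ^ m = ζ ^ (m % p) := by
    intro m
    conv_lhs => rw [← Nat.div_add_mod m p]
    rw [pow_add, pow_mul, hζp, one_pow, one_mul]
  rw [key m, key n, h]

lemma zadd (hζp : ζ ^ p = 1) (a b : ZMod p) :
    ζ ^ (a + b).val = ζ ^ a.val * ζ ^ b.val := by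
  rw [← pow_add]
  refine zpow_mod hζp ?_
  rw [ZMod.val_add, Nat.mod_mod_of_dvd _ dvd_rfl]

lemma diagA (hζp : ζ ^ p = 1) (r : Fin k) :
    (Matrix.diagonal fun i : Fin (p ^ k) => ζ ^ ((i : ℕ) / p ^ (r : ℕ)))
      = Matrix.diagonal fun i => ζ ^ ((((E p k).symm i) r).val) := by
  refine congrArg Matrix.diagonal ?_
  funext i
  refine zpow_mod hζp ?_
  rw [E_symm_val, Nat.mod_mod_of_dvd _ dvd_rfl]

lemma ofB (hp : 1 < p) (r : Fin k) :
    (Matrix.of fun i j : Fin (p ^ k) =>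
        if (j : ℕ) = (if ((i : ℕ) / p ^ (r : ℕ)) % p < p - 1
            then (i : ℕ) + p ^ (r : ℕ)
            else (i : ℕ) - (p - 1) * p ^ (r : ℕ))
        then (1 : ℂ) else 0) = Pm (tau p k r) := by
  ext i j
  simp only [Pm, Matrix.of_apply]
  rw [← tau_coe hp r i]
  exact if_congr (Fin.val_eq_val _ _) rfl rfl

lemma relAB_matrix (hp : 1 < p) (hζp : ζ ^ p = 1) (r s : Fin k) :
    (Matrix.diagonal fun i : Fin (p ^ k) => ζ ^ ((((E p k).symm i) r).val))
        * Pm (tau p k s)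
      = ζ ^ ((if r = s then (-1 : ZMod p) else 0).val) •
        (Pm (tau p k s) * Matrix.diagonal fun i => ζ ^ ((((E p k).symm i) r).val)) := by
  by_cases hrs : r = s
  · subst hrs
    rw [if_pos rfl, diagonal_mul_Pm, Pm_mul_diagonal]
    ext i j
    simp only [Matrix.smul_apply, Matrix.of_apply, smul_ite, smul_eq_mul, mul_zero]
    split_ifs with h
    · rw [E_symm_tau, Pi.add_apply, Pi.single_eq_same, ← zadd hζp]
      have h2 : (-1 : ZMod p) + ((E p k).symm i r + 1) = (E p k).symm i r := by ring
      rw [h2]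
    · rw [mul_zero]
  · rw [if_neg hrs, ZMod.val_zero, pow_zero, one_smul, diagonal_mul_Pm, Pm_mul_diagonal]
    ext i j
    simp only [Matrix.of_apply]
    split_ifs with h
    · rw [E_symm_tau, Pi.add_apply, Pi.single_eq_of_ne hrs, add_zero]
    · rfl

end Zeta

section GRel

variable {ζ : ℂ}

/-- Commutation up to a power of `ζ`. -/
def GRel (ζ : ℂ) (g x : Matrix.unitaryGroup (Fin (p ^ k)) ℂ) (a : ZMod p) : Prop :=
  (g : Matrix (Fin (p ^ k)) (Fin (p ^ k)) ℂ) * (x : Matrix (Fin (p ^ k)) (Fin (p ^ k)) ℂ)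
    = ζ ^ a.val • ((x : Matrix (Fin (p ^ k)) (Fin (p ^ k)) ℂ) * g)

lemma rel_unique (hprim : IsPrimitiveRoot ζ p) {g x : Matrix.unitaryGroup (Fin (p ^ k)) ℂ}
    {a b : ZMod p} (ha : GRel ζ g x a) (hb : GRel ζ g x b) : a = b := by
  have hpos : 0 < p ^ k := Nat.pow_pos (Nat.pos_of_ne_zero (NeZero.ne p))
  haveI : Nonempty (Fin (p ^ k)) := ⟨⟨0, hpos⟩⟩
  have hM : ((x : Matrix (Fin (p ^ k)) (Fin (p ^ k)) ℂ) * g) ≠ 0 := by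
    intro h0
    have h1 := Matrix.UnitaryGroup.star_mul_self (x * g)
    rw [Matrix.UnitaryGroup.mul_val] at h1
    rw [h0, mul_zero] at h1
    exact one_ne_zero h1.symm
  have heq : ζ ^ a.val • ((x : Matrix (Fin (p ^ k)) (Fin (p ^ k)) ℂ) * g)
      = ζ ^ b.val • ((x : Matrix (Fin (p ^ k)) (Fin (p ^ k)) ℂ) * g) := ha.symm.trans hb
  have hsub : (ζ ^ a.val - ζ ^ b.val) • ((x : Matrix (Fin (p ^ k)) (Fin (p ^ k)) ℂ) * g) = 0 := by
    rw [sub_smul, heq, sub_self]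
  rcases smul_eq_zero.mp hsub with h | h
  · have h2 : ζ ^ a.val = ζ ^ b.val := sub_eq_zero.mp h
    exact ZMod.val_injective p (hprim.pow_inj (ZMod.val_lt a) (ZMod.val_lt b) h2)
  · exact absurd h hM

lemma rel_mul (hζp : ζ ^ p = 1) {g h x : Matrix.unitaryGroup (Fin (p ^ k)) ℂ} {a b : ZMod p}
    (ha : GRel ζ g x a) (hb : GRel ζ h x b) : GRel ζ (g * h) x (a + b) := by
  unfold GRel at *
  rw [Matrix.UnitaryGroup.mul_val, mul_assoc, hb, mul_smul_comm, ← mul_assoc, ha,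
    smul_mul_assoc, smul_smul, zadd hζp, mul_comm (ζ ^ a.val), mul_assoc]

lemma rel_inv (hζp : ζ ^ p = 1) {g x : Matrix.unitaryGroup (Fin (p ^ k)) ℂ} {a : ZMod p}
    (ha : GRel ζ g x a) : GRel ζ g⁻¹ x (-a) := by
  unfold GRel at *
  have hsg1 : (star (g : Matrix (Fin (p ^ k)) (Fin (p ^ k)) ℂ)) * g = 1 :=
    Matrix.UnitaryGroup.star_mul_self g
  have hsg2 : (g : Matrix (Fin (p ^ k)) (Fin (p ^ k)) ℂ) * star (g : Matrix (Fin (p ^ k)) (Fin (p ^ k)) ℂ) = 1 :=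
    Matrix.mem_unitaryGroup_iff.mp g.2
  rw [Matrix.UnitaryGroup.inv_val]
  have e1 : (x : Matrix (Fin (p ^ k)) (Fin (p ^ k)) ℂ) * star (g : Matrix (Fin (p ^ k)) (Fin (p ^ k)) ℂ)
      = ζ ^ a.val • (star (g : Matrix (Fin (p ^ k)) (Fin (p ^ k)) ℂ) * x) := by
    have h2 := congrArg
      (fun M => star (g : Matrix (Fin (p ^ k)) (Fin (p ^ k)) ℂ) * M
        * star (g : Matrix (Fin (p ^ k)) (Fin (p ^ k)) ℂ)) ha
    simp only [mul_smul_comm, smul_mul_assoc] at h2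
    rw [← mul_assoc, ← mul_assoc, hsg1, one_mul] at h2
    rw [h2, mul_assoc, mul_assoc, hsg2, mul_one]
  rw [e1, smul_smul, ← zadd hζp]
  have h3 : -a + a = 0 := by ring
  rw [h3, ZMod.val_zero, pow_zero, one_smul]

lemma rel_scalar {g : Matrix.unitaryGroup (Fin (p ^ k)) ℂ} {z : ℂ}
    (hg : (g : Matrix (Fin (p ^ k)) (Fin (p ^ k)) ℂ) = z • 1)
    (x : Matrix.unitaryGroup (Fin (p ^ k)) ℂ) : GRel ζ g x 0 := by
  unfold GRel
  rw [hg, ZMod.val_zero, pow_zero, one_smul, Matrix.smul_mul, Matrix.mul_smul,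
    one_mul, mul_one]

end GRel

lemma schur {ζ : ℂ} (hprim : IsPrimitiveRoot ζ p)
    (M : Matrix (Fin (p ^ k)) (Fin (p ^ k)) ℂ)
    (hAc : ∀ r : Fin k, M * (Matrix.diagonal fun i => ζ ^ ((((E p k).symm i) r).val))
        = (Matrix.diagonal fun i => ζ ^ ((((E p k).symm i) r).val)) * M)
    (hBc : ∀ r : Fin k, M * Pm (tau p k r) = Pm (tau p k r) * M) :
    ∃ z : ℂ, M = z • 1 := by
  have hoff : ∀ i j, i ≠ j → M i j = 0 := by
    intro i j hij
    by_contra hMij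
    have hex : ∃ r, ((E p k).symm i) r ≠ ((E p k).symm j) r := by
      by_contra hc
      push_neg at hc
      exact hij (by
        have := congrArg (E p k) (funext hc)
        simpa using this)
    obtain ⟨r, hr⟩ := hex
    have h1 := congrArg (fun N => N i j) (hAc r)
    simp only [Matrix.mul_diagonal, Matrix.diagonal_mul] at h1
    rw [mul_comm (ζ ^ (((E p k).symm i) r).val) (M i j)] at h1
    have h2 := mul_left_cancel₀ hMij h1
    exact hr (ZMod.val_injective p
      (hprim.pow_inj (ZMod.val_lt _) (ZMod.val_lt _) h2)).symm
  have hstep : ∀ (r : Fin k) i, M i i = M (tau p k r i) (tau p k r i) := by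
    intro r i
    have h1 : (M * Pm (tau p k r)) i (tau p k r i) = (Pm (tau p k r) * M) i (tau p k r i) :=
      congrArg (fun N => N i (tau p k r i)) (hBc r)
    rw [mul_Pm_apply M _ (tau_injective r) i, Pm_mul_apply] at h1
    exact h1
  have hsingle : ∀ (u : Fin k → ZMod p) (r : Fin k),
      M (E p k (u + Pi.single r 1)) (E p k (u + Pi.single r 1)) = M (E p k u) (E p k u) := by
    intro u r
    have h1 := hstep r (E p k u)
    unfold tau at h1
    rw [Equiv.symm_apply_apply] at h1
    exact h1.symm
  have hnsmul : ∀ (n : ℕ) (u : Fin k → ZMod p) (r : Fin k),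
      M (E p k (u + n • Pi.single r 1)) (E p k (u + n • Pi.single r 1))
        = M (E p k u) (E p k u) := by
    intro n
    induction n with
    | zero => intro u r; simp
    | succ n ih =>
      intro u r
      have h1 : u + (n + 1) • (Pi.single r 1 : Fin k → ZMod p)
          = (u + n • Pi.single r 1) + Pi.single r 1 := by
        rw [succ_nsmul]; abel
      rw [h1, hsingle, ih]
  have hsingleC : ∀ (u : Fin k → ZMod p) (r : Fin k) (c : ZMod p),
      M (E p k (u + Pi.single r c)) (E p k (u + Pi.single r c)) = M (E p k u) (E p k u) := by
    intro u r c
    have hc : (Pi.single r c : Fin k → ZMod p) = c.val • Pi.single r 1 := by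
      funext s
      by_cases hs : s = r
      · subst hs
        simp only [Pi.single_eq_same, Pi.smul_apply, smul_eq_mul, nsmul_eq_mul, mul_one]
        exact (ZMod.natCast_rightInverse c).symm
      · simp [Pi.single_eq_of_ne hs]
    rw [hc]
    exact hnsmul c.val u r
  have hsum : ∀ (s : Finset (Fin k)) (u v : Fin k → ZMod p),
      M (E p k (u + ∑ r ∈ s, Pi.single r (v r))) (E p k (u + ∑ r ∈ s, Pi.single r (v r)))
        = M (E p k u) (E p k u) := by
    intro s
    induction s using Finset.induction_on with
    | empty => intro u v; simp
    | @insert a s ha ih =>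
      intro u v
      rw [Finset.sum_insert ha]
      have h1 : u + (Pi.single a (v a) + ∑ r ∈ s, Pi.single r (v r))
          = (u + ∑ r ∈ s, Pi.single r (v r)) + Pi.single a (v a) := by abel
      rw [h1, hsingleC, ih]
  have hdiag : ∀ i, M i i = M (E p k 0) (E p k 0) := by
    intro i
    have h0 := hsum Finset.univ 0 ((E p k).symm i)
    rw [Finset.univ_sum_single, zero_add] at h0
    conv_lhs => rw [← Equiv.apply_symm_apply (E p k) i]
    exact h0
  refine ⟨M (E p k 0) (E p k 0), ?_⟩
  ext i j
  by_cases hij : i = j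
  · subst hij
    rw [Matrix.smul_apply, Matrix.one_apply_eq, smul_eq_mul, mul_one]
    exact hdiag i
  · rw [hoff i j hij, Matrix.smul_apply, Matrix.one_apply_ne hij, smul_eq_mul, mul_zero]

end GammaSES

open GammaSES


/-- The group `Γ_k ⊆ U(p^k)`, generated by the central `S¹`, the diagonal matrices `A_r` with
`(A_r)_{ii} = ζ^{⌊i/p^r⌋}` (`ζ = e^{2πi/p}`, `i = 0, …, p^k - 1`), and the permutation
matrices `B_r` of the translations `σ_r`, fits in a short exact sequence
`1 → S¹ → Γ_k → (ℤ/p)^k × (ℤ/p)^k → 1`: there is a surjective homomorphism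
`Γ_k → (ℤ/p)^k × (ℤ/p)^k` whose kernel is exactly the subgroup of scalar matrices. -/
theorem Gamma_k_ses (p k : ℕ) [Fact p.Prime] (ζ : ℂ)
    (hζ : ζ = Complex.exp (2 * Real.pi * Complex.I / p))
    (A B : Fin k → Matrix.unitaryGroup (Fin (p ^ k)) ℂ)
    (hA : ∀ r : Fin k, (A r : Matrix (Fin (p ^ k)) (Fin (p ^ k)) ℂ)
      = Matrix.diagonal fun i : Fin (p ^ k) => ζ ^ ((i : ℕ) / p ^ (r : ℕ)))
    (hB : ∀ r : Fin k, (B r : Matrix (Fin (p ^ k)) (Fin (p ^ k)) ℂ)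
      = Matrix.of fun i j : Fin (p ^ k) =>
          if (j : ℕ) = (if ((i : ℕ) / p ^ (r : ℕ)) % p < p - 1
              then (i : ℕ) + p ^ (r : ℕ)
              else (i : ℕ) - (p - 1) * p ^ (r : ℕ))
          then (1 : ℂ) else 0)
    (Γ : Subgroup (Matrix.unitaryGroup (Fin (p ^ k)) ℂ))
    (hΓ : Γ = Subgroup.closure
      ({g : Matrix.unitaryGroup (Fin (p ^ k)) ℂ |
          ∃ z : ℂ, (g : Matrix (Fin (p ^ k)) (Fin (p ^ k)) ℂ)
            = z • (1 : Matrix (Fin (p ^ k)) (Fin (p ^ k)) ℂ)}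
        ∪ Set.range A ∪ Set.range B)) :
    ∃ φ : Γ →* (Fin k → Multiplicative (ZMod p)) × (Fin k → Multiplicative (ZMod p)),
      Function.Surjective φ ∧
      ∀ g : Γ, φ g = 1 ↔
        ∃ z : ℂ, ((g : Matrix.unitaryGroup (Fin (p ^ k)) ℂ)
            : Matrix (Fin (p ^ k)) (Fin (p ^ k)) ℂ)
          = z • (1 : Matrix (Fin (p ^ k)) (Fin (p ^ k)) ℂ) := by
  have hpp : p.Prime := Fact.out
  haveI : NeZero p := ⟨hpp.ne_zero⟩
  have hp1 : 1 < p := hpp.one_lt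
  have hprim : IsPrimitiveRoot ζ p := by
    rw [hζ]; exact Complex.isPrimitiveRoot_exp p hpp.ne_zero
  have hζp : ζ ^ p = 1 := hprim.pow_eq_one
  have hA' : ∀ r : Fin k, (A r : Matrix (Fin (p ^ k)) (Fin (p ^ k)) ℂ)
      = Matrix.diagonal fun i => ζ ^ ((((E p k).symm i) r).val) :=
    fun r => (hA r).trans (diagA hζp r)
  have hB' : ∀ r : Fin k, (B r : Matrix (Fin (p ^ k)) (Fin (p ^ k)) ℂ)
      = Pm (tau p k r) := fun r => (hB r).trans (ofB hp1 r)
  -- generator relations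
  have relAA : ∀ r s : Fin k, GRel ζ (A r) (A s) 0 := by
    intro r s
    unfold GRel
    rw [hA' r, hA' s, ZMod.val_zero, pow_zero, one_smul,
      Matrix.diagonal_mul_diagonal, Matrix.diagonal_mul_diagonal]
    exact congrArg Matrix.diagonal (mul_comm _ _)
  have relBB : ∀ r s : Fin k, GRel ζ (B r) (B s) 0 := by
    intro r s
    unfold GRel
    rw [hB' r, hB' s, ZMod.val_zero, pow_zero, one_smul, Pm_mul_Pm, Pm_mul_Pm]
    exact congrArg Pm (funext fun i => tau_comm s r i)
  have relAB : ∀ r s : Fin k, GRel ζ (A r) (B s) (if r = s then -1 else 0) := by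
    intro r s
    unfold GRel
    rw [hA' r, hB' s]
    exact relAB_matrix hp1 hζp r s
  have relBA : ∀ r s : Fin k, GRel ζ (B s) (A r) (if r = s then 1 else 0) := by
    intro r s
    have h := relAB r s
    unfold GRel at h ⊢
    rw [h, smul_smul, ← zadd hζp]
    have h2 : (if r = s then (1 : ZMod p) else 0) + (if r = s then (-1 : ZMod p) else 0)
        = 0 := by split_ifs <;> simp
    rw [h2, ZMod.val_zero, pow_zero, one_smul]
  -- every element of Γ commutes with the generators up to a power of ζ
  have hΓmem : ∀ g ∈ Γ, ∀ r : Fin k,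
      (∃ a : ZMod p, GRel ζ g (A r) a) ∧ (∃ b : ZMod p, GRel ζ g (B r) b) := by
    intro g hg
    rw [hΓ] at hg
    refine Subgroup.closure_induction ?_ ?_ ?_ ?_ hg
    · rintro x ((hx | hx) | hx)
      · obtain ⟨z, hz⟩ := hx
        exact fun r => ⟨⟨0, rel_scalar hz _⟩, ⟨0, rel_scalar hz _⟩⟩
      · obtain ⟨s, rfl⟩ := hx
        exact fun r => ⟨⟨0, relAA s r⟩, ⟨_, relAB s r⟩⟩
      · obtain ⟨s, rfl⟩ := hx
        exact fun r => ⟨⟨_, relBA r s⟩, ⟨0, relBB s r⟩⟩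
    · refine fun r => ⟨⟨0, rel_scalar (z := 1) ?_ _⟩, ⟨0, rel_scalar (z := 1) ?_ _⟩⟩ <;>
        rw [Matrix.UnitaryGroup.one_val, one_smul]
    · rintro x y _ _ hx hy r
      obtain ⟨⟨a1, ha1⟩, ⟨b1, hb1⟩⟩ := hx r
      obtain ⟨⟨a2, ha2⟩, ⟨b2, hb2⟩⟩ := hy r
      exact ⟨⟨a1 + a2, rel_mul hζp ha1 ha2⟩, ⟨b1 + b2, rel_mul hζp hb1 hb2⟩⟩
    · rintro x _ hx r
      obtain ⟨⟨a1, ha1⟩, ⟨b1, hb1⟩⟩ := hx r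
      exact ⟨⟨-a1, rel_inv hζp ha1⟩, ⟨-b1, rel_inv hζp hb1⟩⟩
  have key1 : ∀ (g : Γ) (r : Fin k), ∃ a : ZMod p, GRel ζ (g : Matrix.unitaryGroup (Fin (p ^ k)) ℂ) (A r) a :=
    fun g r => (hΓmem g.1 g.2 r).1
  have key2 : ∀ (g : Γ) (r : Fin k), ∃ b : ZMod p, GRel ζ (g : Matrix.unitaryGroup (Fin (p ^ k)) ℂ) (B r) b :=
    fun g r => (hΓmem g.1 g.2 r).2
  choose aexp haexp using key1
  choose bexp hbexp using key2
  have hmul : ∀ g h : Γ,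
      (∀ r, aexp (g * h) r = aexp g r + aexp h r) ∧
      (∀ r, bexp (g * h) r = bexp g r + bexp h r) := by
    intro g h
    constructor <;> intro r
    · exact rel_unique hprim (haexp (g * h) r) (rel_mul hζp (haexp g r) (haexp h r))
    · exact rel_unique hprim (hbexp (g * h) r) (rel_mul hζp (hbexp g r) (hbexp h r))
  set T := (Fin k → Multiplicative (ZMod p)) × (Fin k → Multiplicative (ZMod p)) with hT
  let φ : Γ →* T := MonoidHom.mk'
    (fun g => (fun r => Multiplicative.ofAdd (aexp g r), fun r => Multiplicative.ofAdd (bexp g r)))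
    (by
      intro g h
      refine Prod.ext ?_ ?_ <;> funext r
      · show Multiplicative.ofAdd (aexp (g * h) r)
          = Multiplicative.ofAdd (aexp g r) * Multiplicative.ofAdd (aexp h r)
        rw [(hmul g h).1 r]; rfl
      · show Multiplicative.ofAdd (bexp (g * h) r)
          = Multiplicative.ofAdd (bexp g r) * Multiplicative.ofAdd (bexp h r)
        rw [(hmul g h).2 r]; rfl)
  refine ⟨φ, ?_, ?_⟩
  · -- surjectivity
    have hAmem : ∀ s, A s ∈ Γ := fun s => by
      rw [hΓ]; exact Subgroup.subset_closure (Or.inl (Or.inr ⟨s, rfl⟩))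
    have hBmem : ∀ s, B s ∈ Γ := fun s => by
      rw [hΓ]; exact Subgroup.subset_closure (Or.inr ⟨s, rfl⟩)
    have haA : ∀ s r, aexp ⟨A s, hAmem s⟩ r = 0 :=
      fun s r => rel_unique hprim (haexp _ r) (relAA s r)
    have hbA : ∀ s r, bexp ⟨A s, hAmem s⟩ r = if s = r then -1 else 0 :=
      fun s r => rel_unique hprim (hbexp _ r) (relAB s r)
    have haB : ∀ s r, aexp ⟨B s, hBmem s⟩ r = if r = s then 1 else 0 :=
      fun s r => rel_unique hprim (haexp _ r) (relBA r s)
    have hbB : ∀ s r, bexp ⟨B s, hBmem s⟩ r = 0 :=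
      fun s r => rel_unique hprim (hbexp _ r) (relBB s r)
    have φB : ∀ s : Fin k, φ ⟨B s, hBmem s⟩
        = (Pi.mulSingle s (Multiplicative.ofAdd (1 : ZMod p)), 1) := by
      intro s
      refine Prod.ext ?_ ?_ <;> funext r
      · show Multiplicative.ofAdd (aexp ⟨B s, hBmem s⟩ r)
          = (Pi.mulSingle s (Multiplicative.ofAdd (1 : ZMod p)) : Fin k → Multiplicative (ZMod p)) r
        rw [haB s r, Pi.mulSingle_apply]
        by_cases h : r = s
        · rw [if_pos h, if_pos h]
        · rw [if_neg h, if_neg h]; rfl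
      · show Multiplicative.ofAdd (bexp ⟨B s, hBmem s⟩ r) = _
        rw [hbB s r]; rfl
    have φA : ∀ s : Fin k, φ ⟨A s, hAmem s⟩
        = (1, Pi.mulSingle s (Multiplicative.ofAdd (-1 : ZMod p))) := by
      intro s
      refine Prod.ext ?_ ?_ <;> funext r
      · show Multiplicative.ofAdd (aexp ⟨A s, hAmem s⟩ r) = _
        rw [haA s r]; rfl
      · show Multiplicative.ofAdd (bexp ⟨A s, hAmem s⟩ r)
          = (Pi.mulSingle s (Multiplicative.ofAdd (-1 : ZMod p)) : Fin k → Multiplicative (ZMod p)) r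
        rw [hbA s r, Pi.mulSingle_apply]
        by_cases h : r = s
        · rw [if_pos h.symm, if_pos h]
        · rw [if_neg (fun hh => h hh.symm), if_neg h]; rfl
    have hpowB : ∀ (s : Fin k) (m : Multiplicative (ZMod p)),
        φ (⟨B s, hBmem s⟩ ^ (Multiplicative.toAdd m).val) = (Pi.mulSingle s m, 1) := by
      intro s m
      rw [map_pow, φB s, Prod.pow_mk, one_pow, ← Pi.mulSingle_pow]
      congr 1
      rw [← ofAdd_nsmul, nsmul_eq_mul, mul_one,
        ZMod.natCast_rightInverse (Multiplicative.toAdd m), ofAdd_toAdd]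
    have hpowA : ∀ (s : Fin k) (m : Multiplicative (ZMod p)),
        φ (⟨A s, hAmem s⟩ ^ ((-(Multiplicative.toAdd m)).val)) = (1, Pi.mulSingle s m) := by
      intro s m
      rw [map_pow, φA s, Prod.pow_mk, one_pow, ← Pi.mulSingle_pow]
      congr 1
      rw [← ofAdd_nsmul, nsmul_eq_mul, mul_neg_one,
        ZMod.natCast_rightInverse (-(Multiplicative.toAdd m)), neg_neg, ofAdd_toAdd]
    rintro ⟨x, y⟩
    set ψ1 := (MonoidHom.fst (Fin k → Multiplicative (ZMod p)) (Fin k → Multiplicative (ZMod p))).comp φ with hψ1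
    set ψ2 := (MonoidHom.snd (Fin k → Multiplicative (ZMod p)) (Fin k → Multiplicative (ZMod p))).comp φ with hψ2
    set fB : Fin k → Γ := fun s => ⟨B s, hBmem s⟩ ^ ((Multiplicative.toAdd (x s)).val) with hfB
    set fA : Fin k → Γ := fun s => ⟨A s, hAmem s⟩ ^ ((-(Multiplicative.toAdd (y s))).val) with hfA
    refine ⟨(List.ofFn fB).prod * (List.ofFn fA).prod, ?_⟩
    have hB1 : ψ1 (List.ofFn fB).prod = x := by
      rw [map_list_prod, List.map_ofFn]
      have h1 : ψ1 ∘ fB = fun s => Pi.mulSingle s (x s) :=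
        funext fun s => congrArg Prod.fst (hpowB s (x s))
      rw [h1, List.prod_ofFn, Finset.univ_prod_mulSingle]
    have hB2 : ψ2 (List.ofFn fB).prod = 1 := by
      rw [map_list_prod, List.map_ofFn]
      have h1 : ψ2 ∘ fB = fun _ => 1 :=
        funext fun s => congrArg Prod.snd (hpowB s (x s))
      rw [h1, List.prod_ofFn, Finset.prod_const_one]
    have hA1 : ψ1 (List.ofFn fA).prod = 1 := by
      rw [map_list_prod, List.map_ofFn]
      have h1 : ψ1 ∘ fA = fun _ => 1 :=
        funext fun s => congrArg Prod.fst (hpowA s (y s))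
      rw [h1, List.prod_ofFn, Finset.prod_const_one]
    have hA2 : ψ2 (List.ofFn fA).prod = y := by
      rw [map_list_prod, List.map_ofFn]
      have h1 : ψ2 ∘ fA = fun s => Pi.mulSingle s (y s) :=
        funext fun s => congrArg Prod.snd (hpowA s (y s))
      rw [h1, List.prod_ofFn, Finset.univ_prod_mulSingle]
    refine Prod.ext ?_ ?_
    · show ψ1 ((List.ofFn fB).prod * (List.ofFn fA).prod) = x
      rw [map_mul, hB1, hA1, mul_one]
    · show ψ2 ((List.ofFn fB).prod * (List.ofFn fA).prod) = y
      rw [map_mul, hB2, hA2, one_mul]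
  · -- kernel
    intro g
    constructor
    · intro h1
      have ha0 : ∀ r, aexp g r = 0 := by
        intro r
        have h2 := congrFun (congrArg Prod.fst h1) r
        exact Multiplicative.ofAdd.injective h2
      have hb0 : ∀ r, bexp g r = 0 := by
        intro r
        have h2 := congrFun (congrArg Prod.snd h1) r
        exact Multiplicative.ofAdd.injective h2
      have hMA : ∀ r, ((g : Matrix.unitaryGroup (Fin (p ^ k)) ℂ) : Matrix (Fin (p ^ k)) (Fin (p ^ k)) ℂ)
          * (Matrix.diagonal fun i => ζ ^ ((((E p k).symm i) r).val))
          = (Matrix.diagonal fun i => ζ ^ ((((E p k).symm i) r).val))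
            * ((g : Matrix.unitaryGroup (Fin (p ^ k)) ℂ) : Matrix (Fin (p ^ k)) (Fin (p ^ k)) ℂ) := by
        intro r
        have h2 := haexp g r
        rw [ha0 r] at h2
        unfold GRel at h2
        rw [ZMod.val_zero, pow_zero, one_smul, hA' r] at h2
        exact h2
      have hMB : ∀ r, ((g : Matrix.unitaryGroup (Fin (p ^ k)) ℂ) : Matrix (Fin (p ^ k)) (Fin (p ^ k)) ℂ)
          * Pm (tau p k r)
          = Pm (tau p k r)
            * ((g : Matrix.unitaryGroup (Fin (p ^ k)) ℂ) : Matrix (Fin (p ^ k)) (Fin (p ^ k)) ℂ) := by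
        intro r
        have h2 := hbexp g r
        rw [hb0 r] at h2
        unfold GRel at h2
        rw [ZMod.val_zero, pow_zero, one_smul, hB' r] at h2
        exact h2
      exact schur hprim _ hMA hMB
    · rintro ⟨z, hz⟩
      have ha0 : ∀ r, aexp g r = 0 := fun r =>
        rel_unique hprim (haexp g r) (rel_scalar hz (A r))
      have hb0 : ∀ r, bexp g r = 0 := fun r =>
        rel_unique hprim (hbexp g r) (rel_scalar hz (B r))
      refine Prod.ext ?_ ?_ <;> funext r
      · show Multiplicative.ofAdd (aexp g r) = _
        rw [ha0 r]; rfl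
      · show Multiplicative.ofAdd (bexp g r) = _
        rw [hb0 r]; rfl
end

section
/- For all nonnegative integers s, t with s + t ≤ k, the group Γ_k ⊆ U(p^k) contains a subgroup isomorphic to Γ_s × (ℤ/p)^t. -/
open Matrix in
/-- `M ↦ M ⊗ I` as a map of matrices, realized on `Fin (p^k)`. -/
noncomputable def PhiMat (p s k : ℕ) (h : p ^ (k-s) * p ^ s = p ^ k)
    (M : Matrix (Fin (p^s)) (Fin (p^s)) ℂ) : Matrix (Fin (p^k)) (Fin (p^k)) ℂ :=
  Matrix.reindexAlgEquiv ℂ ℂ ((Equiv.prodComm _ _).trans (finProdFinEquiv.trans (finCongr h)))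
    (Matrix.blockDiagonal fun _ : Fin (p^(k-s)) => M)

lemma PhiMat_apply (p s k : ℕ) (h : p ^ (k-s) * p ^ s = p ^ k) (hps : 0 < p ^ s)
    (M : Matrix (Fin (p^s)) (Fin (p^s)) ℂ) (i j : Fin (p^k)) :
    PhiMat p s k h M i j =
      if (i:ℕ)/p^s = (j:ℕ)/p^s
      then M ⟨(i:ℕ) % p^s, Nat.mod_lt _ hps⟩ ⟨(j:ℕ) % p^s, Nat.mod_lt _ hps⟩ else 0 := by
  simp only [PhiMat, Matrix.reindexAlgEquiv_apply, Matrix.reindex_apply, Matrix.submatrix_apply,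
    Equiv.symm_trans_apply, finCongr_symm, finCongr_apply, finProdFinEquiv_symm_apply,
    Equiv.prodComm_symm, Equiv.prodComm_apply, Prod.swap_prod_mk,
    Matrix.blockDiagonal_apply]
  have h1 : ∀ x : Fin (p^k), ((Fin.cast h.symm x).divNat : ℕ) = (x:ℕ) / p^s := by
    intro x; rw [Fin.coe_divNat]; rfl
  have h2 : ∀ x : Fin (p^k), ((Fin.cast h.symm x).modNat : ℕ) = (x:ℕ) % p^s := by
    intro x; rw [Fin.coe_modNat]; rfl
  by_cases hc : (i:ℕ)/p^s = (j:ℕ)/p^s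
  · rw [if_pos (by rw [Fin.ext_iff, h1, h1]; exact hc), if_pos hc]
    congr 1 <;> rw [Fin.ext_iff] <;> simp [h1, h2]
  · rw [if_neg (by rw [Fin.ext_iff, h1, h1]; exact hc), if_neg hc]

lemma PhiMat_one (p s k : ℕ) (h : p ^ (k-s) * p ^ s = p ^ k) :
    PhiMat p s k h 1 = 1 := by
  unfold PhiMat
  have : (Matrix.blockDiagonal fun _ : Fin (p^(k-s)) => (1 : Matrix (Fin (p^s)) (Fin (p^s)) ℂ))
      = 1 := Matrix.blockDiagonal_one
  rw [this, map_one]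

lemma PhiMat_mul (p s k : ℕ) (h : p ^ (k-s) * p ^ s = p ^ k)
    (M N : Matrix (Fin (p^s)) (Fin (p^s)) ℂ) :
    PhiMat p s k h (M * N) = PhiMat p s k h M * PhiMat p s k h N := by
  unfold PhiMat
  rw [show (Matrix.blockDiagonal fun _ : Fin (p^(k-s)) => M * N)
      = (Matrix.blockDiagonal fun _ : Fin (p^(k-s)) => M)
        * (Matrix.blockDiagonal fun _ : Fin (p^(k-s)) => N) from Matrix.blockDiagonal_mul _ _,
    map_mul]

lemma PhiMat_star (p s k : ℕ) (h : p ^ (k-s) * p ^ s = p ^ k)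
    (M : Matrix (Fin (p^s)) (Fin (p^s)) ℂ) :
    PhiMat p s k h (star M) = star (PhiMat p s k h M) := by
  unfold PhiMat
  simp only [Matrix.reindexAlgEquiv_apply, Matrix.reindex_apply, Matrix.star_eq_conjTranspose,
    Matrix.conjTranspose_submatrix, Matrix.blockDiagonal_conjTranspose]

lemma PhiMat_smul (p s k : ℕ) (h : p ^ (k-s) * p ^ s = p ^ k) (z : ℂ)
    (M : Matrix (Fin (p^s)) (Fin (p^s)) ℂ) :
    PhiMat p s k h (z • M) = z • PhiMat p s k h M := by
  unfold PhiMat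
  have : (Matrix.blockDiagonal fun _ : Fin (p^(k-s)) => z • M)
      = z • (Matrix.blockDiagonal fun _ : Fin (p^(k-s)) => M) := by
    ext ⟨a,b⟩ ⟨c,d⟩
    simp only [Matrix.blockDiagonal_apply, Matrix.smul_apply]
    split <;> simp
  rw [this, map_smul]


/-- Splitting a division by `p^r` along the decomposition `i = (i % p^s) + (i / p^s) * p^s`. -/
lemma div_split_pow (p r s : ℕ) (hp : 0 < p) (hr : r < s) (i : ℕ) :
    i / p ^ r = (i % p ^ s) / p ^ r + (i / p ^ s) * p ^ (s - r) := by
  conv_lhs => rw [← Nat.mod_add_div' i (p ^ s)]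
  have hpr : 0 < p ^ r := Nat.pow_pos (n := r) hp
  have hs : p ^ s = p ^ r * p ^ (s - r) := by rw [← pow_add]; congr 1; omega
  rw [hs, show i / (p ^ r * p ^ (s-r)) * (p ^ r * p ^ (s-r))
      = (i / (p ^ r * p ^ (s-r)) * p ^ (s-r)) * p ^ r by ring, Nat.add_mul_div_right _ _ hpr]

lemma digit_mod_pow (p r s : ℕ) (hp : 0 < p) (hr : r < s) (i : ℕ) :
    (i / p ^ r) % p = ((i % p ^ s) / p ^ r) % p := by
  rw [div_split_pow p r s hp hr i,
    show p ^ (s - r) = p ^ (s - r - 1) * p by rw [← pow_succ]; congr 1; omega,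
    ← mul_assoc, Nat.add_mul_mod_self_right]

/-- If the `r`-th digit of `m` is below `p - 1` then adding `p^r` stays below `p^s`. -/
lemma add_pow_lt (p r s m : ℕ) (hp : 1 < p) (hr : r < s) (hm : m < p ^ s)
    (hd : (m / p ^ r) % p < p - 1) : m + p ^ r < p ^ s := by
  have h1 : m % p ^ (r+1) = m % p ^ r + p ^ r * (m / p ^ r % p) := Nat.mod_pow_succ
  have h2 : m % p ^ r < p ^ r := Nat.mod_lt _ (Nat.pow_pos (n := r) (by omega))
  have h3 : m / p ^ (r+1) < p ^ (s - r - 1) := by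
    rw [Nat.div_lt_iff_lt_mul (Nat.pow_pos (n := _) (by omega)), ← pow_add]
    have : s - r - 1 + (r + 1) = s := by omega
    rwa [this]
  have h4 : m = m / p ^ (r+1) * p ^ (r+1) + m % p ^ (r+1) := (Nat.div_add_mod' m _).symm
  have h5 : p ^ (r+1) = p * p ^ r := by rw [pow_succ]; ring
  have h6 : m / p ^ (r+1) * p ^ (r+1) ≤ (p ^ (s-r-1) - 1) * p ^ (r+1) :=
    Nat.mul_le_mul_right _ (by omega)
  have h7 : (p ^ (s-r-1) - 1) * p ^ (r+1) + p ^ (r + 1) = p ^ s := by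
    have : 0 < p ^ (s - r - 1) := Nat.pow_pos (n := _) (by omega)
    have hss : (s - r - 1) + (r + 1) = s := by omega
    calc (p ^ (s-r-1) - 1) * p ^ (r+1) + p ^ (r + 1)
        = (p ^ (s-r-1) - 1 + 1) * p ^ (r+1) := by ring
      _ = p ^ (s-r-1) * p ^ (r+1) := by congr 1; omega
      _ = p ^ s := by rw [← pow_add, hss]
  -- m + p^r ≤ stuff
  have h8 : m % p ^ (r+1) + p ^ r < p ^ (r+1) := by
    rw [h1, h5]
    have hle : m / p ^ r % p + 2 ≤ p := by omega
    nlinarith [Nat.mul_le_mul_left (p ^ r) hle, h2]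
  omega

/-- If the `r`-th digit of `m` is `≥ p - 1` (i.e. equal to `p-1`), then `(p-1)*p^r ≤ m`. -/
lemma sub_pow_le (p r m : ℕ) (hd : ¬ (m / p ^ r) % p < p - 1) : (p - 1) * p ^ r ≤ m := by
  have h1 : p - 1 ≤ m / p ^ r % p := by omega
  have h2 : m / p ^ r % p ≤ m / p ^ r := Nat.mod_le _ _
  calc (p-1) * p ^ r ≤ (m / p ^ r) * p ^ r := Nat.mul_le_mul_right _ (by omega)
    _ ≤ m := Nat.div_mul_le_self _ _
/-- The index translation implemented by the permutation matrix `B_r`. -/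
def Tsh (p c i : ℕ) : ℕ := if (i / c) % p < p - 1 then i + c else i - (p-1) * c

lemma Tsh_div_mod (p r s : ℕ) (hp : 1 < p) (hr : r < s) (i : ℕ) :
    Tsh p (p^r) i / p ^ s = i / p ^ s ∧
      Tsh p (p^r) i % p ^ s = Tsh p (p^r) (i % p ^ s) ∧ Tsh p (p^r) (i % p ^ s) < p ^ s := by
  have hps : 0 < p ^ s := Nat.pow_pos (n := _) (by omega)
  have hm : i % p ^ s < p ^ s := Nat.mod_lt _ hps
  have hdm := Nat.div_add_mod i (p ^ s)
  have hcond : (i / p ^ r) % p < p - 1 ↔ ((i % p ^ s) / p ^ r) % p < p - 1 := by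
    rw [digit_mod_pow p r s (by omega) hr i]
  by_cases hd : ((i % p ^ s) / p ^ r) % p < p - 1
  · have hlt : i % p ^ s + p ^ r < p ^ s := add_pow_lt p r s (i % p ^ s) hp hr hm hd
    have hT : Tsh p (p^r) i = p ^ s * (i / p ^ s) + (i % p ^ s + p ^ r) := by
      rw [Tsh, if_pos (hcond.mpr hd)]; omega
    have hTm : Tsh p (p^r) (i % p ^ s) = i % p ^ s + p ^ r := by rw [Tsh, if_pos hd]
    refine ⟨?_, ?_, ?_⟩
    · rw [hT, Nat.mul_add_div hps, Nat.div_eq_of_lt hlt, add_zero]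
    · rw [hT, hTm, Nat.mul_add_mod, Nat.mod_eq_of_lt hlt]
    · omega
  · have hle : (p - 1) * p ^ r ≤ i % p ^ s := sub_pow_le p r _ hd
    have hT : Tsh p (p^r) i = p ^ s * (i / p ^ s) + (i % p ^ s - (p-1) * p ^ r) := by
      rw [Tsh, if_neg (by rw [hcond]; exact hd)]; omega
    have hTm : Tsh p (p^r) (i % p ^ s) = i % p ^ s - (p-1) * p ^ r := by rw [Tsh, if_neg hd]
    refine ⟨?_, ?_, ?_⟩
    · rw [hT, Nat.mul_add_div hps,
        Nat.div_eq_of_lt (show i % p ^ s - (p-1) * p ^ r < p ^ s by omega), add_zero]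
    · rw [hT, hTm, Nat.mul_add_mod,
        Nat.mod_eq_of_lt (show i % p ^ s - (p-1) * p ^ r < p ^ s by omega)]
    · omega

lemma Tsh_eq_iff (p r s : ℕ) (hp : 1 < p) (hr : r < s) (i j : ℕ) :
    j = Tsh p (p^r) i ↔ (j / p ^ s = i / p ^ s ∧ j % p ^ s = Tsh p (p^r) (i % p ^ s)) := by
  obtain ⟨h1, h2, _⟩ := Tsh_div_mod p r s hp hr i
  constructor
  · rintro rfl; exact ⟨h1, h2⟩
  · rintro ⟨ha, hb⟩
    conv_lhs => rw [← Nat.div_add_mod j (p ^ s)]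
    rw [ha, hb, ← h1, ← h2]
    exact Nat.div_add_mod _ _
lemma diag_noncommProd {n ι : Type*} [Fintype n] [DecidableEq n] (sfin : Finset ι)
    (w : ι → n → ℂ) (comm) :
    sfin.noncommProd (fun j => Matrix.diagonal (w j)) comm
      = Matrix.diagonal (fun i => ∏ j ∈ sfin, w j i) := by
  let diagHom : (n → ℂ) →* Matrix n n ℂ :=
    { toFun := Matrix.diagonal, map_one' := Matrix.diagonal_one,
      map_mul' := fun a b => (Matrix.diagonal_mul_diagonal a b).symm }
  calc sfin.noncommProd (fun j => Matrix.diagonal (w j)) comm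
      = diagHom (sfin.noncommProd w (fun a _ b _ _ => Commute.all _ _)) :=
        (Finset.map_noncommProd sfin w (fun a _ b _ _ => Commute.all _ _) diagHom).symm
    _ = Matrix.diagonal (fun i => ∏ j ∈ sfin, w j i) := by
        rw [Finset.noncommProd_eq_prod]
        show Matrix.diagonal (∏ j ∈ sfin, w j) = _
        have : (∏ j ∈ sfin, w j) = fun i => ∏ j ∈ sfin, w j i :=
          funext fun i => Finset.prod_apply i sfin w
        rw [this]

lemma diagonal_commute {n : Type*} [Fintype n] [DecidableEq n] (f g : n → ℂ) :
    Commute (Matrix.diagonal f) (Matrix.diagonal g) := by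
  show _ * _ = _ * _
  rw [Matrix.diagonal_mul_diagonal, Matrix.diagonal_mul_diagonal]
  have : (fun i => f i * g i) = fun i => g i * f i := funext fun i => mul_comm _ _
  rw [this]
lemma pow_mod_cancel {G : Type*} [Monoid G] {g : G} {p : ℕ} (h : g ^ p = 1) (n : ℕ) :
    g ^ (n % p) = g ^ n := by
  conv_rhs => rw [← Nat.mod_add_div n p]
  rw [pow_add, pow_mul, h, one_pow, mul_one]

lemma pow_congr_mod {G : Type*} [Monoid G] {g : G} {p : ℕ} (h : g ^ p = 1) {a b : ℕ}
    (hab : a % p = b % p) : g ^ a = g ^ b := by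
  rw [← pow_mod_cancel h a, ← pow_mod_cancel h b, hab]

/-- For all nonnegative integers `s, t` with `s + t ≤ k`, the group `Γ_k ⊆ U(p^k)` contains a
subgroup isomorphic to `Γ_s × (ℤ/p)^t`: there is an injective group homomorphism
`Γ_s × (ℤ/p)^t → Γ_k`. -/
theorem Gamma_k_contains_Gamma_s_times_Delta_t (p k s t : ℕ) [Fact p.Prime]
    (hst : s + t ≤ k) (ζ : ℂ)
    (hζ : ζ = Complex.exp (2 * Real.pi * Complex.I / p))
    (A B : Fin k → Matrix.unitaryGroup (Fin (p ^ k)) ℂ)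
    (hA : ∀ r : Fin k, (A r : Matrix (Fin (p ^ k)) (Fin (p ^ k)) ℂ)
      = Matrix.diagonal fun i : Fin (p ^ k) => ζ ^ ((i : ℕ) / p ^ (r : ℕ)))
    (hB : ∀ r : Fin k, (B r : Matrix (Fin (p ^ k)) (Fin (p ^ k)) ℂ)
      = Matrix.of fun i j : Fin (p ^ k) =>
          if (j : ℕ) = (if ((i : ℕ) / p ^ (r : ℕ)) % p < p - 1
              then (i : ℕ) + p ^ (r : ℕ)
              else (i : ℕ) - (p - 1) * p ^ (r : ℕ))
          then (1 : ℂ) else 0)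
    (Γk : Subgroup (Matrix.unitaryGroup (Fin (p ^ k)) ℂ))
    (hΓk : Γk = Subgroup.closure
      ({g : Matrix.unitaryGroup (Fin (p ^ k)) ℂ |
          ∃ z : ℂ, (g : Matrix (Fin (p ^ k)) (Fin (p ^ k)) ℂ)
            = z • (1 : Matrix (Fin (p ^ k)) (Fin (p ^ k)) ℂ)}
        ∪ Set.range A ∪ Set.range B))
    (A' B' : Fin s → Matrix.unitaryGroup (Fin (p ^ s)) ℂ)
    (hA' : ∀ r : Fin s, (A' r : Matrix (Fin (p ^ s)) (Fin (p ^ s)) ℂ)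
      = Matrix.diagonal fun i : Fin (p ^ s) => ζ ^ ((i : ℕ) / p ^ (r : ℕ)))
    (hB' : ∀ r : Fin s, (B' r : Matrix (Fin (p ^ s)) (Fin (p ^ s)) ℂ)
      = Matrix.of fun i j : Fin (p ^ s) =>
          if (j : ℕ) = (if ((i : ℕ) / p ^ (r : ℕ)) % p < p - 1
              then (i : ℕ) + p ^ (r : ℕ)
              else (i : ℕ) - (p - 1) * p ^ (r : ℕ))
          then (1 : ℂ) else 0)
    (Γs : Subgroup (Matrix.unitaryGroup (Fin (p ^ s)) ℂ))
    (hΓs : Γs = Subgroup.closure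
      ({g : Matrix.unitaryGroup (Fin (p ^ s)) ℂ |
          ∃ z : ℂ, (g : Matrix (Fin (p ^ s)) (Fin (p ^ s)) ℂ)
            = z • (1 : Matrix (Fin (p ^ s)) (Fin (p ^ s)) ℂ)}
        ∪ Set.range A' ∪ Set.range B')) :
    ∃ f : Γs × (Fin t → Multiplicative (ZMod p)) →* Γk,
      Function.Injective f := by
  have hp : 1 < p := (Fact.out : p.Prime).one_lt
  haveI : NeZero p := ⟨by omega⟩
  have hsk : s ≤ k := by omega
  have hks : p ^ (k-s) * p ^ s = p ^ k := by rw [← pow_add]; congr 1; omega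
  have hps : 0 < p ^ s := Nat.pow_pos (n := _) (by omega)
  have hprim : IsPrimitiveRoot ζ p := hζ ▸ Complex.isPrimitiveRoot_exp p (by omega)
  have hz : ζ ^ p = 1 := hprim.pow_eq_one
  -- the unitary-level embedding M ↦ M ⊗ I
  have hmem : ∀ M : Matrix.unitaryGroup (Fin (p^s)) ℂ,
      PhiMat p s k hks ↑M ∈ Matrix.unitaryGroup (Fin (p^k)) ℂ := by
    intro M
    rw [Matrix.mem_unitaryGroup_iff, ← PhiMat_star, ← PhiMat_mul,
      Unitary.mul_star_self_of_mem M.2, PhiMat_one]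
  let Φ : Matrix.unitaryGroup (Fin (p^s)) ℂ →* Matrix.unitaryGroup (Fin (p^k)) ℂ :=
  { toFun := fun M => ⟨PhiMat p s k hks ↑M, hmem M⟩,
    map_one' := Subtype.ext (PhiMat_one p s k hks),
    map_mul' := fun a b => Subtype.ext (PhiMat_mul p s k hks a b) }
  have hΦ : ∀ M : Matrix.unitaryGroup (Fin (p^s)) ℂ,
      (Φ M : Matrix (Fin (p^k)) (Fin (p^k)) ℂ) = PhiMat p s k hks ↑M := fun _ => rfl
  -- images of the generators
  have hPhiA : ∀ r : Fin s, Φ (A' r) = A ⟨r, lt_of_lt_of_le r.2 hsk⟩ := by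
    intro r
    apply Subtype.ext
    rw [hΦ, hA', hA]
    ext i j
    rw [PhiMat_apply p s k hks hps]
    simp only [Matrix.diagonal_apply]
    by_cases hij : i = j
    · subst hij
      rw [if_pos rfl, if_pos rfl, if_pos rfl]
      exact pow_congr_mod hz (digit_mod_pow p r s (by omega) r.2 i).symm
    · rw [if_neg hij]
      by_cases h1 : (i:ℕ)/p^s = (j:ℕ)/p^s
      · rw [if_pos h1, if_neg]
        intro h2
        apply hij
        have h3 : (i:ℕ) % p ^ s = (j:ℕ) % p ^ s := congrArg Fin.val h2
        refine Fin.ext ?_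
        conv_lhs => rw [← Nat.div_add_mod (i:ℕ) (p^s)]
        rw [h1, h3, Nat.div_add_mod]
      · rw [if_neg h1]
  have hPhiB : ∀ r : Fin s, Φ (B' r) = B ⟨r, lt_of_lt_of_le r.2 hsk⟩ := by
    intro r
    apply Subtype.ext
    rw [hΦ, hB', hB]
    ext i j
    rw [PhiMat_apply p s k hks hps]
    show _ = if (j:ℕ) = Tsh p (p^(r:ℕ)) (i:ℕ) then (1:ℂ) else 0
    have key := Tsh_eq_iff p r s hp r.2 (i:ℕ) (j:ℕ)
    show (if (i:ℕ)/p^s = (j:ℕ)/p^s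
        then (if ((j:ℕ) % p^s) = Tsh p (p^(r:ℕ)) ((i:ℕ) % p^s) then (1:ℂ) else 0) else 0) = _
    by_cases h1 : (i:ℕ)/p^s = (j:ℕ)/p^s
    · by_cases h2 : (j:ℕ) % p^s = Tsh p (p^(r:ℕ)) ((i:ℕ) % p^s)
      · rw [if_pos h1, if_pos h2, if_pos (key.mpr ⟨h1.symm, h2⟩)]
      · rw [if_pos h1, if_neg h2, if_neg (fun hc => h2 (key.mp hc).2)]
    · rw [if_neg h1, if_neg (fun hc => h1 (key.mp hc).1.symm)]
  -- Γs maps into Γk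
  have hsub : Γs ≤ Subgroup.comap Φ Γk := by
    rw [hΓs]
    refine (Subgroup.closure_le _).mpr ?_
    rintro g ((⟨z, hgz⟩ | ⟨r, rfl⟩) | ⟨r, rfl⟩)
    · show Φ g ∈ Γk
      rw [hΓk]
      refine Subgroup.subset_closure (Or.inl (Or.inl ⟨z, ?_⟩))
      rw [hΦ, hgz, PhiMat_smul, PhiMat_one]
    · show Φ (A' r) ∈ Γk
      rw [hΓk]
      exact Subgroup.subset_closure (Or.inl (Or.inr ⟨_, (hPhiA r).symm⟩))
    · show Φ (B' r) ∈ Γk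
      rw [hΓk]
      exact Subgroup.subset_closure (Or.inr ⟨_, (hPhiB r).symm⟩)
  let f₁ : Γs →* Γk := (Φ.comp Γs.subtype).codRestrict Γk (fun x => hsub x.2)
  -- the diagonal generators used for the (ℤ/p)^t factor
  have hgAmem : ∀ j : Fin t, A ⟨s + (j:ℕ), by omega⟩ ∈ Γk := by
    intro j
    rw [hΓk]
    exact Subgroup.subset_closure (Or.inl (Or.inr ⟨_, rfl⟩))
  let gA : Fin t → Γk := fun j => ⟨A ⟨s + (j:ℕ), by omega⟩, hgAmem j⟩
  let coeM : Γk →* Matrix (Fin (p^k)) (Fin (p^k)) ℂ :=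
    ((Matrix.unitaryGroup (Fin (p^k)) ℂ).subtype).comp Γk.subtype
  have hcoeM_inj : Function.Injective coeM := fun a b h => Subtype.ext (Subtype.ext h)
  have hcoeM_f₁ : ∀ m : Γs, coeM (f₁ m) = PhiMat p s k hks ↑↑m := fun _ => rfl
  have h_gA_pow : ∀ (j : Fin t) (n : ℕ), coeM (gA j ^ n)
      = Matrix.diagonal (fun i : Fin (p^k) => ζ ^ (((i:ℕ)/p^(s+(j:ℕ))) * n)) := by
    intro j n
    have hAj : coeM (gA j) = Matrix.diagonal
        (fun i : Fin (p^k) => ζ ^ ((i:ℕ) / p ^ (s+(j:ℕ)))) := hA ⟨s + (j:ℕ), by omega⟩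
    rw [map_pow, hAj, Matrix.diagonal_pow]
    have hfun : ((fun i : Fin (p^k) => ζ ^ ((i:ℕ) / p ^ (s+(j:ℕ)))) ^ n)
        = fun i : Fin (p^k) => ζ ^ (((i:ℕ)/p^(s+(j:ℕ))) * n) := by
      funext i; rw [Pi.pow_apply, ← pow_mul]
    rw [hfun]
  have h_gA_p : ∀ j : Fin t, gA j ^ p = 1 := by
    intro j
    apply hcoeM_inj
    rw [h_gA_pow, map_one]
    have hfun : (fun i : Fin (p^k) => ζ ^ (((i:ℕ)/p^(s+(j:ℕ))) * p))
        = fun _ : Fin (p^k) => (1:ℂ) := by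
      funext i; rw [mul_comm, pow_mul, hz, one_pow]
    rw [hfun]
    exact Matrix.diagonal_one
  let ψ : ∀ _ : Fin t, Multiplicative (ZMod p) →* Γk := fun j =>
  { toFun := fun x => gA j ^ (Multiplicative.toAdd x).val,
    map_one' := by
      show gA j ^ (Multiplicative.toAdd (1 : Multiplicative (ZMod p))).val = 1
      rw [toAdd_one, ZMod.val_zero, pow_zero],
    map_mul' := fun x y => by
      show gA j ^ (Multiplicative.toAdd (x * y)).val
        = gA j ^ (Multiplicative.toAdd x).val * gA j ^ (Multiplicative.toAdd y).val
      rw [toAdd_mul, ZMod.val_add, pow_mod_cancel (h_gA_p j), pow_add] }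
  have hcommA : ∀ (jm jn : Fin t) (a b : ℕ), Commute (gA jm ^ a) (gA jn ^ b) := by
    intro jm jn a b
    apply Commute.pow_pow
    show gA jm * gA jn = gA jn * gA jm
    apply hcoeM_inj
    rw [map_mul, map_mul]
    have e1 := h_gA_pow jm 1
    have e2 := h_gA_pow jn 1
    rw [pow_one] at e1 e2
    rw [e1, e2, Matrix.diagonal_mul_diagonal, Matrix.diagonal_mul_diagonal]
    have : (fun i : Fin (p^k) => ζ ^ (((i:ℕ)/p^(s+(jm:ℕ))) * 1) * ζ ^ (((i:ℕ)/p^(s+(jn:ℕ))) * 1))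
        = fun i : Fin (p^k) => ζ ^ (((i:ℕ)/p^(s+(jn:ℕ))) * 1) * ζ ^ (((i:ℕ)/p^(s+(jm:ℕ))) * 1) :=
      funext fun i => mul_comm _ _
    rw [this]
  let f₂ : (Fin t → Multiplicative (ZMod p)) →* Γk :=
    MonoidHom.noncommPiCoprod ψ (fun jm jn _ x y => hcommA jm jn _ _)
  -- the commutation between the two factors
  have hCommute : ∀ (m : Γs) (v : Fin t → Multiplicative (ZMod p)), Commute (f₁ m) (f₂ v) := by
    intro m v
    rw [show f₂ v = Finset.univ.noncommProd (fun j => ψ j (v j))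
        (fun a _ b _ _ => hcommA a b _ _) from MonoidHom.noncommPiCoprod_apply ψ v]
    apply Finset.noncommProd_commute
    intro j _
    show Commute (f₁ m) (gA j ^ (Multiplicative.toAdd (v j)).val)
    apply Commute.pow_right
    show f₁ m * gA j = gA j * f₁ m
    apply hcoeM_inj
    rw [map_mul, map_mul, hcoeM_f₁]
    have e1 := h_gA_pow j 1
    rw [pow_one] at e1
    rw [e1]
    ext i j'
    rw [Matrix.mul_diagonal, Matrix.diagonal_mul, PhiMat_apply p s k hks hps]
    have hdd : ∀ x : ℕ, x / p^(s+(j:ℕ)) = x / p^s / p^(j:ℕ) := by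
      intro x; rw [Nat.div_div_eq_div_mul, pow_add]
    by_cases h1 : (i:ℕ)/p^s = (j':ℕ)/p^s
    · rw [if_pos h1]
      have : ((j':ℕ)/p^(s+(j:ℕ))) = ((i:ℕ)/p^(s+(j:ℕ))) := by rw [hdd, hdd, h1]
      rw [this, mul_comm]
    · rw [if_neg h1, zero_mul, mul_zero]
  let f : Γs × (Fin t → Multiplicative (ZMod p)) →* Γk :=
    MonoidHom.noncommCoprod f₁ f₂ hCommute
  refine ⟨f, ?_⟩
  rw [injective_iff_map_eq_one]
  rintro ⟨m, v⟩ h1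
  rw [show f (m, v) = f₁ m * f₂ v from rfl] at h1
  -- the matrix form of f₂ v
  have hD : coeM (f₂ v) = Matrix.diagonal (fun i : Fin (p^k) =>
      ζ ^ (∑ jj : Fin t, ((i:ℕ)/p^(s+(jj:ℕ))) * (Multiplicative.toAdd (v jj)).val)) := by
    calc coeM (f₂ v)
        = Finset.univ.noncommProd (fun j => coeM (ψ j (v j)))
            (fun (a : Fin t) _ (b : Fin t) _ _ => ((hcommA a b _ _).map coeM)) := by
          rw [show f₂ v = Finset.univ.noncommProd (fun j => ψ j (v j))
            (fun a _ b _ _ => hcommA a b _ _) from MonoidHom.noncommPiCoprod_apply ψ v]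
          exact Finset.map_noncommProd _ _ _ coeM
      _ = Finset.univ.noncommProd (fun j : Fin t => Matrix.diagonal
            (fun i : Fin (p^k) => ζ ^ (((i:ℕ)/p^(s+(j:ℕ))) * (Multiplicative.toAdd (v j)).val)))
            (fun (a : Fin t) _ (b : Fin t) _ _ => diagonal_commute _ _) :=
          Finset.noncommProd_congr rfl
            (fun j _ => h_gA_pow j (Multiplicative.toAdd (v j)).val) _
      _ = Matrix.diagonal (fun i : Fin (p^k) => ∏ jj : Fin t,
            ζ ^ (((i:ℕ)/p^(s+(jj:ℕ))) * (Multiplicative.toAdd (v jj)).val)) :=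
          diag_noncommProd _ _ _
      _ = _ := by
          have : (fun i : Fin (p^k) => ∏ jj : Fin t,
              ζ ^ (((i:ℕ)/p^(s+(jj:ℕ))) * (Multiplicative.toAdd (v jj)).val))
              = fun i : Fin (p^k) =>
                ζ ^ (∑ jj : Fin t, ((i:ℕ)/p^(s+(jj:ℕ))) * (Multiplicative.toAdd (v jj)).val) :=
            funext fun i => Finset.prod_pow_eq_pow_sum _ _ _
          rw [this]
  have hEq : PhiMat p s k hks (↑↑m) * Matrix.diagonal (fun i : Fin (p^k) =>
      ζ ^ (∑ jj : Fin t, ((i:ℕ)/p^(s+(jj:ℕ))) * (Multiplicative.toAdd (v jj)).val)) = 1 := by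
    rw [← hD, ← hcoeM_f₁ m, ← map_mul, h1, map_one]
  rw [← Matrix.ext_iff] at hEq
  have hle : p ^ s ≤ p ^ k := Nat.pow_le_pow_right (by omega) hsk
  -- Step A: the Γs component is trivial
  have hM1 : (↑↑m : Matrix (Fin (p^s)) (Fin (p^s)) ℂ) = 1 := by
    ext a b
    have he := hEq ⟨(a:ℕ), lt_of_lt_of_le a.2 hle⟩ ⟨(b:ℕ), lt_of_lt_of_le b.2 hle⟩
    rw [Matrix.mul_diagonal, PhiMat_apply p s k hks hps] at he
    rw [if_pos (show (a:ℕ)/p^s = (b:ℕ)/p^s by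
      rw [Nat.div_eq_of_lt a.2, Nat.div_eq_of_lt b.2])] at he
    have hsum : (∑ jj : Fin t, ((b:ℕ)/p^(s+(jj:ℕ))) * (Multiplicative.toAdd (v jj)).val) = 0 :=
      Finset.sum_eq_zero fun jj _ => by
        rw [Nat.div_eq_of_lt (lt_of_lt_of_le b.2 (Nat.pow_le_pow_right (by omega) (by omega))),
          zero_mul]
    rw [show (∑ jj : Fin t,
        (((⟨(b:ℕ), lt_of_lt_of_le b.2 hle⟩ : Fin (p^k)):ℕ)/p^(s+(jj:ℕ)))
          * (Multiplicative.toAdd (v jj)).val) = 0 from hsum, pow_zero, mul_one] at he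
    rw [show (⟨((⟨(a:ℕ), lt_of_lt_of_le a.2 hle⟩ : Fin (p^k)):ℕ) % p ^ s,
        Nat.mod_lt _ hps⟩ : Fin (p^s)) = a from Fin.ext (Nat.mod_eq_of_lt a.2)] at he
    rw [show (⟨((⟨(b:ℕ), lt_of_lt_of_le b.2 hle⟩ : Fin (p^k)):ℕ) % p ^ s,
        Nat.mod_lt _ hps⟩ : Fin (p^s)) = b from Fin.ext (Nat.mod_eq_of_lt b.2)] at he
    by_cases hab : a = b
    · subst hab
      rw [he, Matrix.one_apply_eq, Matrix.one_apply_eq]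
    · rw [he, Matrix.one_apply_ne hab,
        Matrix.one_apply_ne (show (⟨(a:ℕ), lt_of_lt_of_le a.2 hle⟩ : Fin (p^k))
          ≠ ⟨(b:ℕ), lt_of_lt_of_le b.2 hle⟩ from
          fun hc => hab (Fin.ext (congrArg (fun x : Fin (p^k) => (x:ℕ)) hc)))]
  have hm_one : m = 1 := Subtype.ext (Subtype.ext hM1)
  -- Step B: the diagonal component is trivial
  rw [hM1, PhiMat_one, one_mul] at hEq
  have hdiag1 : ∀ i : Fin (p^k),
      ζ ^ (∑ jj : Fin t, ((i:ℕ)/p^(s+(jj:ℕ))) * (Multiplicative.toAdd (v jj)).val) = 1 := by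
    intro i
    have h2 := hEq i i
    rw [Matrix.diagonal_apply_eq, Matrix.one_apply_eq] at h2
    exact h2
  have hv : v = 1 := by
    funext j0
    have hlt0 : p ^ (s + (j0:ℕ)) < p ^ k := Nat.pow_lt_pow_right hp (by omega)
    have h3 := hdiag1 ⟨p^(s+(j0:ℕ)), hlt0⟩
    rw [← Finset.prod_pow_eq_pow_sum] at h3
    have h4 : (∏ jj : Fin t, ζ ^ ((((⟨p^(s+(j0:ℕ)), hlt0⟩ : Fin (p^k)):ℕ)/p^(s+(jj:ℕ)))
        * (Multiplicative.toAdd (v jj)).val))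
        = ζ ^ (((p^(s+(j0:ℕ)))/p^(s+(j0:ℕ))) * (Multiplicative.toAdd (v j0)).val) := by
      refine Finset.prod_eq_single j0 ?_ (fun habs => absurd (Finset.mem_univ j0) habs)
      intro jj _ hne
      have hnv : (jj:ℕ) ≠ (j0:ℕ) := fun h => hne (Fin.ext h)
      rcases lt_or_gt_of_ne hnv with hlt | hgt
      · have hdiv : (p^(s+(j0:ℕ)))/p^(s+(jj:ℕ)) = p^((j0:ℕ)-(jj:ℕ)) := by
          rw [Nat.pow_div (by omega) (by omega)]; congr 1; omega
        show ζ ^ ((p^(s+(j0:ℕ))/p^(s+(jj:ℕ))) * (Multiplicative.toAdd (v jj)).val) = 1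
        rw [hdiv, show p^((j0:ℕ)-(jj:ℕ)) = p * p^((j0:ℕ)-(jj:ℕ)-1) from by
          rw [← pow_succ']; congr 1; omega]
        rw [mul_assoc, pow_mul, hz, one_pow]
      · show ζ ^ ((p^(s+(j0:ℕ))/p^(s+(jj:ℕ))) * (Multiplicative.toAdd (v jj)).val) = 1
        rw [Nat.div_eq_of_lt (Nat.pow_lt_pow_right hp (by omega)), zero_mul, pow_zero]
    rw [h4, Nat.div_self (Nat.pow_pos (n := _) (by omega)), one_mul] at h3
    have h6 : p ∣ (Multiplicative.toAdd (v j0)).val := (hprim.pow_eq_one_iff_dvd _).mp h3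
    have h7 : (Multiplicative.toAdd (v j0)).val = 0 :=
      Nat.eq_zero_of_dvd_of_lt h6 (ZMod.val_lt _)
    exact toAdd_eq_zero.mp ((ZMod.val_eq_zero _).mp h7)
  exact Prod.ext hm_one hv
end
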